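/- The everywhere doubled line D is connected. -/
import Mathlib


/-- A wave: open set downstairs with a finite subset lifted upstairs. -/
def Wave (O F : Set ℝ) : Set (ℝ × Bool) :=
  ((O \ F) ×ˢ ({false} : Set Bool)) ∪ (F ×ˢ ({true} : Set Bool))

/-- The collection of all waves. -/
def Waves : Set (Set (ℝ × Bool)) :=
  {S | ∃ O F : Set ℝ, IsOpen O ∧ F ⊆ O ∧ F.Finite ∧ S = Wave O F}

/-- The topology of the everywhere doubled line D on ℝ × Bool. -/
def DTop : TopologicalSpace (ℝ × Bool) := TopologicalSpace.generateFrom Waves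

lemma mem_wave_false {O F : Set ℝ} {y : ℝ} : (y, false) ∈ Wave O F ↔ y ∈ O \ F := by
  simp [Wave]

lemma mem_wave_true {O F : Set ℝ} {y : ℝ} : (y, true) ∈ Wave O F ↔ y ∈ F := by
  simp [Wave]

lemma isOpen_real_infinite {O : Set ℝ} (hO : IsOpen O) (hne : O.Nonempty) : O.Infinite := by
  obtain ⟨x, hx⟩ := hne
  exact infinite_of_mem_nhds x (hO.mem_nhds hx)

lemma waves_basis : @TopologicalSpace.IsTopologicalBasis (ℝ × Bool) DTop Waves := by
  refine @TopologicalSpace.IsTopologicalBasis.mk (ℝ × Bool) DTop Waves ?_ ?_ rfl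
  · rintro t₁ ⟨O₁, F₁, hO₁, hF₁O, hF₁, rfl⟩ t₂ ⟨O₂, F₂, hO₂, hF₂O, hF₂, rfl⟩ p hp
    set O' : Set ℝ := (O₁ ∩ O₂) \ ((F₁ ∪ F₂) \ (F₁ ∩ F₂)) with hO'def
    have hO' : IsOpen O' := (hO₁.inter hO₂).sdiff
      (((hF₁.union hF₂).subset Set.diff_subset).isClosed)
    have heq : Wave O' (F₁ ∩ F₂) = Wave O₁ F₁ ∩ Wave O₂ F₂ := by
      ext ⟨y, b⟩
      cases b <;>
        simp only [Set.mem_inter_iff, mem_wave_false, mem_wave_true, hO'def,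
          Set.mem_diff, Set.mem_inter_iff, Set.mem_union] <;> tauto
    refine ⟨Wave O' (F₁ ∩ F₂), ⟨O', F₁ ∩ F₂, hO', ?_, hF₁.inter_of_left _, rfl⟩, ?_, ?_⟩
    · intro y hy
      refine ⟨⟨hF₁O hy.1, hF₂O hy.2⟩, ?_⟩
      simp [hy.1, hy.2]
    · rw [heq]; exact hp
    · rw [heq]
  · apply Set.eq_univ_of_forall
    rintro ⟨y, b⟩
    cases b
    · exact ⟨Wave Set.univ ∅, ⟨Set.univ, ∅, isOpen_univ, by simp, Set.finite_empty, rfl⟩,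
        mem_wave_false.2 (by simp)⟩
    · exact ⟨Wave Set.univ {y}, ⟨Set.univ, {y}, isOpen_univ, by simp, Set.finite_singleton y, rfl⟩,
        mem_wave_true.2 rfl⟩

theorem doubledLine_connected : @ConnectedSpace (ℝ × Bool) DTop := by
  letI := DTop
  refine { toNonempty := ⟨(0, false)⟩, isPreconnected_univ := ?_ }
  rintro u v hu hv hcov ⟨a, -, ha⟩ ⟨b, -, hb⟩
  by_contra h
  have huv : u ∩ v = ∅ := by
    rw [Set.not_nonempty_iff_eq_empty, Set.univ_inter] at h
    exact h
  -- downstairs shadows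
  set A : Set ℝ := {x | (x, false) ∈ u} with hAdef
  set B : Set ℝ := {x | (x, false) ∈ v} with hBdef
  have hABcov : ∀ x : ℝ, x ∈ A ∨ x ∈ B := fun x => hcov (Set.mem_univ (x, false))
  have hABdisj : ∀ x : ℝ, x ∈ A → x ∈ B → False := by
    intro x hxA hxB
    have : (x, false) ∈ u ∩ v := ⟨hxA, hxB⟩
    rw [huv] at this
    exact this
  have keyA : ∀ x ∈ A, ∃ O : Set ℝ, IsOpen O ∧ x ∈ O ∧ (O ∩ B).Finite := by
    intro x hx
    obtain ⟨t, ⟨O, F, hO, hFO, hF, rfl⟩, hxt, htu⟩ :=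
      waves_basis.exists_subset_of_mem_open hx hu
    rw [mem_wave_false] at hxt
    refine ⟨O, hO, hxt.1, hF.subset ?_⟩
    rintro y ⟨hyO, hyB⟩
    by_contra hyF
    exact hABdisj y (htu (mem_wave_false.2 ⟨hyO, hyF⟩)) hyB
  have keyB : ∀ x ∈ B, ∃ O : Set ℝ, IsOpen O ∧ x ∈ O ∧ (O ∩ A).Finite := by
    intro x hx
    obtain ⟨t, ⟨O, F, hO, hFO, hF, rfl⟩, hxt, htv⟩ :=
      waves_basis.exists_subset_of_mem_open hx hv
    rw [mem_wave_false] at hxt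
    refine ⟨O, hO, hxt.1, hF.subset ?_⟩
    rintro y ⟨hyO, hyA⟩
    by_contra hyF
    exact hABdisj y hyA (htv (mem_wave_false.2 ⟨hyO, hyF⟩))
  -- A and B are nonempty
  have shadow_ne : ∀ (w : Set (ℝ × Bool)), IsOpen w → ∀ p ∈ w,
      ∀ (C : Set ℝ), (∀ z, ((z, false) ∈ w → z ∈ C)) → C.Nonempty := by
    intro w hw p hp C hC
    obtain ⟨t, ⟨O, F, hO, hFO, hF, rfl⟩, hpt, htw⟩ :=
      waves_basis.exists_subset_of_mem_open hp hw
    have hOne : O.Nonempty := by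
      obtain ⟨y, c⟩ := p
      cases c
      · exact ⟨y, (mem_wave_false.1 hpt).1⟩
      · exact ⟨y, hFO (mem_wave_true.1 hpt)⟩
    obtain ⟨z, hzO, hzF⟩ := ((isOpen_real_infinite hO hOne).diff hF).nonempty
    exact ⟨z, hC z (htw (mem_wave_false.2 ⟨hzO, hzF⟩))⟩
  have hAne : A.Nonempty := shadow_ne u hu a ha A (fun z hz => hz)
  have hBne : B.Nonempty := shadow_ne v hv b hb B (fun z hz => hz)
  -- Euclidean open sets
  set U : Set ℝ := {x | ∃ O : Set ℝ, IsOpen O ∧ x ∈ O ∧ (O ∩ B).Finite} with hUdef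
  set V : Set ℝ := {x | ∃ O : Set ℝ, IsOpen O ∧ x ∈ O ∧ (O ∩ A).Finite} with hVdef
  have hU : IsOpen U := by
    refine isOpen_iff_forall_mem_open.2 ?_
    rintro x ⟨O, hO, hxO, hOB⟩
    exact ⟨O, fun y hy => ⟨O, hO, hy, hOB⟩, hO, hxO⟩
  have hV : IsOpen V := by
    refine isOpen_iff_forall_mem_open.2 ?_
    rintro x ⟨O, hO, hxO, hOA⟩
    exact ⟨O, fun y hy => ⟨O, hO, hy, hOA⟩, hO, hxO⟩
  have hAU : A ⊆ U := fun x hx => keyA x hx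
  have hBV : B ⊆ V := fun x hx => keyB x hx
  have hUVcov : (Set.univ : Set ℝ) ⊆ U ∪ V := by
    intro x _
    rcases hABcov x with hx | hx
    · exact Or.inl (hAU hx)
    · exact Or.inr (hBV hx)
  have hUVdisj : U ∩ V = ∅ := by
    rw [Set.eq_empty_iff_forall_notMem]
    rintro x ⟨⟨O₁, hO₁, hxO₁, hO₁B⟩, ⟨O₂, hO₂, hxO₂, hO₂A⟩⟩
    have hinf : (O₁ ∩ O₂).Infinite :=
      isOpen_real_infinite (hO₁.inter hO₂) ⟨x, hxO₁, hxO₂⟩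
    have hsub : O₁ ∩ O₂ ⊆ (O₁ ∩ B) ∪ (O₂ ∩ A) := by
      rintro y ⟨hy₁, hy₂⟩
      rcases hABcov y with hy | hy
      · exact Or.inr ⟨hy₂, hy⟩
      · exact Or.inl ⟨hy₁, hy⟩
    exact hinf ((hO₁B.union hO₂A).subset hsub)
  obtain ⟨x', -, hxUV⟩ := (isPreconnected_univ (α := ℝ)) U V hU hV hUVcov
    ⟨hAne.choose, Set.mem_univ _, hAU hAne.choose_spec⟩
    ⟨hBne.choose, Set.mem_univ _, hBV hBne.choose_spec⟩
  rw [hUVdisj] at hxUV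
  exact hxUV
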